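/- The measure dμ_R(b,a,φ) = a⁻¹ db da dφ on the affine Poincaré group is right-invariant: for every integrable f and every (b₀,a₀,φ₀) ∈ G, ∫ f((b,a,φ)∗(b₀,a₀,φ₀)) a⁻¹ db da dφ = ∫ f(b,a,φ) a⁻¹ db da dφ. -/

import Mathlib

open Real MeasureTheory Matrix Set MeasureTheory.Measure
open scoped ENNReal

noncomputable section

/-- Hyperbolic rotation matrix. -/
def Lam (φ : ℝ) : Matrix (Fin 2) (Fin 2) ℝ :=
  !![Real.cosh φ, Real.sinh φ; Real.sinh φ, Real.cosh φ]

/-- Minkowski inner product on ℝ². -/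
def mink (x y : Fin 2 → ℝ) : ℝ := x 0 * y 0 - x 1 * y 1

/-- Underlying set of the affine Poincaré group. -/
abbrev P : Type := (Fin 2 → ℝ) × ℝ × ℝ

/-- Group operation. -/
def Pmul (g h : P) : P :=
  (g.1 + g.2.1 • (Lam g.2.2).mulVec h.1, g.2.1 * h.2.1, g.2.2 + h.2.2)

/-- Inverse. -/
def Pinv (g : P) : P :=
  (-(g.2.1⁻¹ • (Lam (-g.2.2)).mulVec g.1), g.2.1⁻¹, -g.2.2)

/-- Left Haar measure `a⁻³ db da dφ` on the affine Poincaré group. -/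
def muL : Measure P :=
  ((volume : Measure P).restrict {g : P | 0 < g.2.1}).withDensity
    fun g => ENNReal.ofReal ((g.2.1 ^ 3)⁻¹)

/-- Right Haar measure `a⁻¹ db da dφ` on the affine Poincaré group. -/
def muR : Measure P :=
  ((volume : Measure P).restrict {g : P | 0 < g.2.1}).withDensity
    fun g => ENNReal.ofReal (g.2.1⁻¹)

/-- Haar measure on multiplicative positive reals. -/
def nuA : Measure ℝ :=
  ((volume : Measure ℝ).restrict (Ioi 0)).withDensity fun a => ENNReal.ofReal a⁻¹

instance : SigmaFinite nuA := by
  unfold nuA; infer_instance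

lemma map_withDensity_equiv {α β : Type*} [MeasurableSpace α] [MeasurableSpace β]
    (e : α ≃ᵐ β) (μ : Measure α) {w : α → ℝ≥0∞} (hw : Measurable w) :
    (μ.withDensity w).map e = (μ.map e).withDensity fun b => w (e.symm b) := by
  ext s hs
  rw [Measure.map_apply e.measurable hs, withDensity_apply _ (e.measurable hs),
    withDensity_apply _ hs,
    setLIntegral_map hs (show Measurable fun b => w (e.symm b) from hw.comp e.symm.measurable)
      e.measurable]
  simp

lemma nuA_mul_right {a₀ : ℝ} (ha₀ : 0 < a₀) :
    MeasurePreserving (fun a : ℝ => a * a₀) nuA nuA := by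
  have hne : a₀ ≠ 0 := ha₀.ne'
  set e : ℝ ≃ᵐ ℝ := (Homeomorph.mulRight₀ a₀ hne).toMeasurableEquiv with he
  have hco : ⇑e = fun a : ℝ => a * a₀ := rfl
  have hsymm : ∀ b, e.symm b = b / a₀ := fun b => rfl
  have hw : Measurable fun a : ℝ => ENNReal.ofReal a⁻¹ :=
    measurable_inv.ennreal_ofReal
  refine ⟨by rw [← hco]; exact e.measurable, ?_⟩
  have hpre : ⇑e ⁻¹' (Ioi 0) = Ioi 0 := by
    ext x
    simp only [mem_preimage, mem_Ioi, hco]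
    constructor
    · intro h; nlinarith
    · intro h; positivity
  calc Measure.map (fun a : ℝ => a * a₀) nuA = nuA.map e := by rw [hco]
    _ = ((volume.restrict (Ioi 0)).map e).withDensity fun b => ENNReal.ofReal (e.symm b)⁻¹ :=
        map_withDensity_equiv e _ hw
    _ = (((volume : Measure ℝ).map e).restrict (Ioi 0)).withDensity
          fun b => ENNReal.ofReal (e.symm b)⁻¹ := by
        rw [Measure.restrict_map e.measurable measurableSet_Ioi, hpre]
    _ = ((ENNReal.ofReal |a₀⁻¹| • (volume : Measure ℝ)).restrict (Ioi 0)).withDensity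
          fun b => ENNReal.ofReal (e.symm b)⁻¹ := by
        rw [hco, Real.map_volume_mul_right hne]
    _ = (volume.restrict (Ioi 0)).withDensity
          fun b => ENNReal.ofReal |a₀⁻¹| * ENNReal.ofReal (b / a₀)⁻¹ := by
        rw [Measure.restrict_smul, withDensity_smul_measure]
        rw [show (fun b : ℝ => ENNReal.ofReal |a₀⁻¹| * ENNReal.ofReal (b / a₀)⁻¹)
            = (ENNReal.ofReal |a₀⁻¹| • fun b : ℝ => ENNReal.ofReal (e.symm b)⁻¹) by
          funext b; simp [hsymm]]
        rw [withDensity_smul' _ _ ENNReal.ofReal_ne_top]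
    _ = nuA := by
        rw [nuA]
        congr 1
        funext b
        rw [← ENNReal.ofReal_mul (abs_nonneg _)]
        congr 1
        rw [abs_of_pos (inv_pos.mpr ha₀)]
        rcases eq_or_ne b 0 with rfl | hb
        · simp
        · field_simp

lemma withDensity_fst_prod {α β : Type*} [MeasurableSpace α] [MeasurableSpace β]
    (μ : Measure α) (ρ : Measure β) [SFinite μ] [SFinite ρ]
    {w : α → ℝ≥0∞} (hw : Measurable w) :
    (μ.prod ρ).withDensity (fun p => w p.1) = (μ.withDensity w).prod ρ := by
  ext s hs
  rw [withDensity_apply _ hs, Measure.prod_apply hs,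
    ← lintegral_indicator hs]
  have hm : Measurable fun p : α × β => w p.1 := hw.comp measurable_fst
  rw [lintegral_prod _ (hm.indicator hs).aemeasurable,
    lintegral_withDensity_eq_lintegral_mul _ hw (measurable_measure_prodMk_left hs)]
  refine lintegral_congr fun x => ?_
  simp only [Pi.mul_apply]
  rw [← lintegral_indicator_const (measurable_prodMk_left hs)]
  refine lintegral_congr fun y => ?_
  by_cases h : (x, y) ∈ s <;> simp [indicator, h, mem_preimage]

lemma withDensity_snd_prod {α β : Type*} [MeasurableSpace α] [MeasurableSpace β]
    (μ : Measure α) (ρ : Measure β) [SFinite μ] [SFinite ρ]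
    {w : β → ℝ≥0∞} (hw : Measurable w) :
    (μ.prod ρ).withDensity (fun p => w p.2) = μ.prod (ρ.withDensity w) := by
  ext s hs
  rw [withDensity_apply _ hs, Measure.prod_apply hs,
    ← lintegral_indicator hs]
  have hm : Measurable fun p : α × β => w p.2 := hw.comp measurable_snd
  rw [lintegral_prod _ (hm.indicator hs).aemeasurable]
  refine lintegral_congr fun x => ?_
  rw [withDensity_apply _ (measurable_prodMk_left hs), ← lintegral_indicator
    (measurable_prodMk_left hs)]
  refine lintegral_congr fun y => ?_
  by_cases h : (x, y) ∈ s <;> simp [indicator, h, mem_preimage]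

lemma muR_eq_prod :
    muR = ((volume : Measure (Fin 2 → ℝ)).prod (nuA.prod (volume : Measure ℝ))) := by
  have hset : {g : P | 0 < g.2.1} = (univ : Set (Fin 2 → ℝ)) ×ˢ ((Ioi 0) ×ˢ (univ : Set ℝ)) := by
    ext g; simp [Set.mem_prod]
  have hvol : (volume : Measure P)
      = (volume : Measure (Fin 2 → ℝ)).prod ((volume : Measure ℝ).prod (volume : Measure ℝ)) := by
    rw [Measure.volume_eq_prod, Measure.volume_eq_prod]
  rw [muR, hset, hvol, ← Measure.prod_restrict, ← Measure.prod_restrict,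
    Measure.restrict_univ, Measure.restrict_univ]
  have hw : Measurable fun q : ℝ × ℝ => ENNReal.ofReal q.1⁻¹ :=
    (measurable_inv.comp measurable_fst).ennreal_ofReal
  rw [show (fun g : P => ENNReal.ofReal g.2.1⁻¹)
      = (fun g : P => (fun q : ℝ × ℝ => ENNReal.ofReal q.1⁻¹) g.2) from rfl,
    withDensity_snd_prod _ _ hw,
    withDensity_fst_prod _ _ measurable_inv.ennreal_ofReal]
  rfl

lemma measurable_shift (g₀ : P) :
    Measurable fun q : ℝ × ℝ => q.1 • (Lam q.2).mulVec g₀.1 := by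
  apply Measurable.smul measurable_fst
  apply measurable_pi_lambda
  intro i
  have : Continuous fun φ : ℝ => (Lam φ).mulVec g₀.1 i := by
    simp only [Lam, Matrix.mulVec, dotProduct]
    fin_cases i <;> simp [Fin.sum_univ_two] <;> fun_prop
  exact (this.measurable).comp measurable_snd

lemma pmul_measurePreserving (g₀ : P) (hg₀ : 0 < g₀.2.1) :
    MeasurePreserving (fun g => Pmul g g₀) muR muR := by
  rw [muR_eq_prod]
  haveI inst : SigmaFinite nuA := inferInstance
  let μb : Measure (Fin 2 → ℝ) := volume
  let μq : Measure (ℝ × ℝ) := nuA.prod (volume : Measure ℝ)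
  have hS : MeasurePreserving
      (Prod.map (fun a : ℝ => a * g₀.2.1) (fun φ : ℝ => φ + g₀.2.2)) μq μq :=
    (nuA_mul_right hg₀).prod (measurePreserving_add_right volume g₀.2.2)
  have hskew : MeasurePreserving
      (fun p : (ℝ × ℝ) × (Fin 2 → ℝ) =>
        (Prod.map (fun a : ℝ => a * g₀.2.1) (fun φ : ℝ => φ + g₀.2.2) p.1,
          p.2 + p.1.1 • (Lam p.1.2).mulVec g₀.1))
      (μq.prod μb) (μq.prod μb) := by
    refine MeasurePreserving.skew_product (μa := μq) (μb := μq) (μc := μb) (μd := μb)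
      (g := fun (q : ℝ × ℝ) (b : Fin 2 → ℝ) => b + q.1 • (Lam q.2).mulVec g₀.1) hS ?_ (Filter.Eventually.of_forall fun q => ?_)
    · exact measurable_snd.add ((measurable_shift g₀).comp measurable_fst)
    · exact (measurePreserving_add_right μb (q.1 • (Lam q.2).mulVec g₀.1)).map_eq
  have hswap1 : MeasurePreserving (Prod.swap : (Fin 2 → ℝ) × (ℝ × ℝ) → (ℝ × ℝ) × (Fin 2 → ℝ))
      (μb.prod μq) (μq.prod μb) := measurePreserving_swap
  have hswap2 : MeasurePreserving (Prod.swap : (ℝ × ℝ) × (Fin 2 → ℝ) → (Fin 2 → ℝ) × (ℝ × ℝ))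
      (μq.prod μb) (μb.prod μq) := measurePreserving_swap
  have := (hswap2.comp hskew).comp hswap1
  convert this using 1
  funext g
  rfl

/-- `a⁻¹ db da dφ` is right-invariant. -/
theorem muR_right_invariant (f : P → ℝ) (hf : Integrable f muR)
    (g₀ : P) (hg₀ : 0 < g₀.2.1) :
    ∫ g, f (Pmul g g₀) ∂muR = ∫ g, f g ∂muR := by
  have hT := pmul_measurePreserving g₀ hg₀
  conv_rhs => rw [← hT.map_eq]
  exact (integral_map hT.aemeasurable (by rw [hT.map_eq]; exact hf.1)).symm
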